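/- Let R = (1−z²)^{-2} Π_{k≥1} (1−z^{2k+2})^{-3} ∈ ℤ[[z]] and let G_d = (1−z²)^{-2} Π_{k=3}^{d−1} (1−z^{2(k−1)})^{-3} ∈ ℤ[[z]] for d ≥ 5. Then the coefficients of z^{2i} in R and in G_d agree for all i ≤ d−2, the coefficient of z^{2(d−1)} in G_d is 3 less than that in R, and the coefficient of z^{2d} in G_d is 9 less than that in R. -/

import Mathlib

/-!
STATEMENT 16: Let `R = (1−z²)^{-2} Π_{k≥1}(1−z^{2k+2})^{-3}` and
`G_d = (1−z²)^{-2} Π_{k=3}^{d−1} (1−z^{2(k−1)})^{-3}` in `ℤ[[z]]`, for `d ≥ 5`.  Then the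
coefficients of `z^{2i}` in `R` and `G_d` agree for all `i ≤ d−2`, the coefficient of
`z^{2(d−1)}` in `G_d` is 3 less than that of `R`, and the coefficient of `z^{2d}` in `G_d`
is 9 less than that of `R`.

Each factor `(1−z^a)^{-1}` (`a ≥ 1`) is the geometric series `Σ_{l≥0} z^{al}`.  The
infinite product in `R` is harmless for coefficients up to `z^{2d}`: factors with
`2k+2 > 2d`, i.e. `k ≥ d`, do not contribute, so we truncate the product at `k ≤ d`.
-/

open PowerSeries

/-- The geometric series `(1 − z^a)^{-1} = Σ_{l≥0} z^{al}` in `ℤ[[z]]` (for `a ≥ 1`). -/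
noncomputable def geomSeries (a : ℕ) : PowerSeries ℤ :=
  PowerSeries.mk fun m => if a ∣ m then 1 else 0

/-- `R = (1−z²)^{-2} Π_{k≥1}(1−z^{2k+2})^{-3}`, truncated at `k ≤ d` (higher factors do not
affect coefficients of `z^j` for `j ≤ 2d`). -/
noncomputable def Rd (d : ℕ) : PowerSeries ℤ :=
  geomSeries 2 ^ 2 * ∏ k ∈ Finset.Icc 1 d, geomSeries (2 * k + 2) ^ 3

/-- `G_d = (1−z²)^{-2} Π_{k=3}^{d−1}(1−z^{2(k−1)})^{-3}`, the generating series of monomials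
in the Pi–Shen generators. -/
noncomputable def Gd (d : ℕ) : PowerSeries ℤ :=
  geomSeries 2 ^ 2 * ∏ k ∈ Finset.Icc 3 (d - 1), geomSeries (2 * (k - 1)) ^ 3

/-- For `d ≥ 5`: the coefficients of `z^{2i}` in `G_d` and `R` agree for
`i ≤ d−2`; the coefficient of `z^{2(d−1)}` in `G_d` is 3 less than in `R`; and the
coefficient of `z^{2d}` in `G_d` is 9 less than in `R`. -/
-- indicator sum over antidiagonal, both slots
lemma sum_ind (n s t : ℕ) (x y : ℤ) :
    (∑ p ∈ Finset.HasAntidiagonal.antidiagonal n, (if p.1 = s then x else 0) * (if p.2 = t then y else 0))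
      = if s + t = n then x * y else 0 := by
  by_cases h : s + t = n
  · rw [if_pos h, Finset.sum_eq_single (s, t)]
    · simp
    · rintro ⟨p1, p2⟩ hp hne
      rw [Finset.HasAntidiagonal.mem_antidiagonal] at hp
      by_cases h1 : p1 = s
      · have h2 : p2 ≠ t := fun h2 => hne (by simp [h1, h2])
        simp [h2]
      · simp [h1]
    · intro hmem; exact absurd (Finset.HasAntidiagonal.mem_antidiagonal.mpr h) hmem
  · rw [if_neg h]
    apply Finset.sum_eq_zero
    rintro ⟨p1, p2⟩ hp
    rw [Finset.HasAntidiagonal.mem_antidiagonal] at hp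
    by_cases h1 : p1 = s
    · have h2 : p2 ≠ t := by subst h1; omega
      simp [h2]
    · simp [h1]

-- indicator in second slot only
lemma sum_snd_ind (n t : ℕ) (g : ℕ → ℤ) (c : ℤ) :
    (∑ p ∈ Finset.HasAntidiagonal.antidiagonal n, g p.1 * (if p.2 = t then c else 0))
      = if t ≤ n then g (n - t) * c else 0 := by
  by_cases h : t ≤ n
  · rw [if_pos h, Finset.sum_eq_single (n - t, t)]
    · simp
    · rintro ⟨p1, p2⟩ hp hne
      simp only [Finset.HasAntidiagonal.mem_antidiagonal] at hp
      have h2 : p2 ≠ t := by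
        rintro rfl
        exact hne (by simp only [Prod.mk.injEq, and_true]; omega)
      simp [h2]
    · intro hmem
      exact absurd (Finset.HasAntidiagonal.mem_antidiagonal.mpr (by omega)) hmem
  · rw [if_neg h]
    apply Finset.sum_eq_zero
    rintro ⟨p1, p2⟩ hp
    simp only [Finset.HasAntidiagonal.mem_antidiagonal] at hp
    have h2 : p2 ≠ t := by omega
    simp [h2]

lemma coeff_geom (a m : ℕ) : PowerSeries.coeff (R := ℤ) m (geomSeries a) = if a ∣ m then 1 else 0 := by
  simp [geomSeries]

lemma coeff_geom_lt (a m : ℕ) (h : m < 2 * a) :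
    PowerSeries.coeff (R := ℤ) m (geomSeries a)
      = (if m = 0 then 1 else 0) + (if m = a then 1 else 0) := by
  have ha : 0 < a := by omega
  rw [coeff_geom]
  by_cases hd : a ∣ m
  · obtain ⟨k, rfl⟩ := hd
    have hk : k = 0 ∨ k = 1 := by
      rcases Nat.lt_or_ge k 2 with hk | hk
      · omega
      · exfalso; nlinarith
    rcases hk with rfl | rfl
    · simp [ha.ne]
    · simp [ha.ne']
  · have h0 : m ≠ 0 := by rintro rfl; exact hd (dvd_zero a)
    have h1 : m ≠ a := by rintro rfl; exact hd dvd_rfl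
    simp [hd, h0, h1]

lemma coeff_geom_sq (a m : ℕ) (h : m < 2 * a) :
    PowerSeries.coeff (R := ℤ) m (geomSeries a ^ 2)
      = (if m = 0 then 1 else 0) + (if m = a then 2 else 0) := by
  rw [sq, PowerSeries.coeff_mul]
  have hcong : ∀ p ∈ Finset.HasAntidiagonal.antidiagonal m,
      PowerSeries.coeff (R := ℤ) p.1 (geomSeries a) * PowerSeries.coeff (R := ℤ) p.2 (geomSeries a)
        = ((if p.1 = 0 then (1:ℤ) else 0) + (if p.1 = a then 1 else 0))
          * ((if p.2 = 0 then (1:ℤ) else 0) + (if p.2 = a then 1 else 0)) := by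
    intro p hp
    simp only [Finset.HasAntidiagonal.mem_antidiagonal] at hp
    rw [coeff_geom_lt a p.1 (by omega), coeff_geom_lt a p.2 (by omega)]
  rw [Finset.sum_congr rfl hcong]
  simp only [add_mul, mul_add, Finset.sum_add_distrib, sum_ind]
  have ha : 0 < a := by omega
  split_ifs <;> omega

lemma coeff_geom_cube (a m : ℕ) (h : m < 2 * a) :
    PowerSeries.coeff (R := ℤ) m (geomSeries a ^ 3)
      = (if m = 0 then 1 else 0) + (if m = a then 3 else 0) := by
  rw [pow_succ, PowerSeries.coeff_mul]
  have hcong : ∀ p ∈ Finset.HasAntidiagonal.antidiagonal m,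
      PowerSeries.coeff (R := ℤ) p.1 (geomSeries a ^ 2) * PowerSeries.coeff (R := ℤ) p.2 (geomSeries a)
        = ((if p.1 = 0 then (1:ℤ) else 0) + (if p.1 = a then 2 else 0))
          * ((if p.2 = 0 then (1:ℤ) else 0) + (if p.2 = a then 1 else 0)) := by
    intro p hp
    simp only [Finset.HasAntidiagonal.mem_antidiagonal] at hp
    rw [coeff_geom_sq a p.1 (by omega), coeff_geom_lt a p.2 (by omega)]
  rw [Finset.sum_congr rfl hcong]
  simp only [add_mul, mul_add, Finset.sum_add_distrib, sum_ind]
  have ha : 0 < a := by omega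
  split_ifs <;> omega

lemma coeff_AB (a b m : ℕ) (ha : 0 < a) (hab : a < b) (h2 : b < 2 * a) (hm : m ≤ b) :
    PowerSeries.coeff (R := ℤ) m (geomSeries a ^ 3 * geomSeries b ^ 3)
      = (if m = 0 then 1 else 0) + (if m = a then 3 else 0) + (if m = b then 3 else 0) := by
  rw [PowerSeries.coeff_mul]
  have hcong : ∀ p ∈ Finset.HasAntidiagonal.antidiagonal m,
      PowerSeries.coeff (R := ℤ) p.1 (geomSeries a ^ 3) * PowerSeries.coeff (R := ℤ) p.2 (geomSeries b ^ 3)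
        = ((if p.1 = 0 then (1:ℤ) else 0) + (if p.1 = a then 3 else 0))
          * ((if p.2 = 0 then (1:ℤ) else 0) + (if p.2 = b then 3 else 0)) := by
    intro p hp
    simp only [Finset.HasAntidiagonal.mem_antidiagonal] at hp
    rw [coeff_geom_cube a p.1 (by omega), coeff_geom_cube b p.2 (by omega)]
  rw [Finset.sum_congr rfl hcong]
  simp only [add_mul, mul_add, Finset.sum_add_distrib, sum_ind]
  split_ifs <;> omega

lemma coeff_E (a b c m : ℕ) (ha : 0 < a) (hab : a < b) (hbc : b < c) (h2 : b < 2 * a)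
    (hm : m ≤ b) :
    PowerSeries.coeff (R := ℤ) m (geomSeries a ^ 3 * geomSeries b ^ 3 * geomSeries c ^ 3)
      = (if m = 0 then 1 else 0) + (if m = a then 3 else 0) + (if m = b then 3 else 0) := by
  rw [PowerSeries.coeff_mul]
  have hcong : ∀ p ∈ Finset.HasAntidiagonal.antidiagonal m,
      PowerSeries.coeff (R := ℤ) p.1 (geomSeries a ^ 3 * geomSeries b ^ 3)
          * PowerSeries.coeff (R := ℤ) p.2 (geomSeries c ^ 3)
        = ((if p.1 = 0 then (1:ℤ) else 0) + (if p.1 = a then 3 else 0)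
            + (if p.1 = b then 3 else 0))
          * ((if p.2 = 0 then (1:ℤ) else 0) + (if p.2 = c then 3 else 0)) := by
    intro p hp
    simp only [Finset.HasAntidiagonal.mem_antidiagonal] at hp
    rw [coeff_AB a b p.1 ha hab h2 (by omega), coeff_geom_cube c p.2 (by omega)]
  rw [Finset.sum_congr rfl hcong]
  simp only [add_mul, mul_add, Finset.sum_add_distrib, sum_ind]
  split_ifs <;> omega


/-- Low coefficients of a product vanish if they vanish in each factor. -/
lemma coeff_prod_low_zero (S : Finset ℕ) (f : ℕ → PowerSeries ℤ) (n : ℕ)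
    (hf : ∀ k ∈ S, ∀ m, 0 < m → m ≤ n → PowerSeries.coeff (R := ℤ) m (f k) = 0) :
    ∀ m, 0 < m → m ≤ n → PowerSeries.coeff (R := ℤ) m (∏ k ∈ S, f k) = 0 := by
  induction S using Finset.induction with
  | empty =>
    intro m hm _
    simp [PowerSeries.coeff_one, hm.ne']
  | @insert a S ha ih =>
    intro m hm hmn
    rw [Finset.prod_insert ha, PowerSeries.coeff_mul]
    apply Finset.sum_eq_zero
    rintro ⟨p1, p2⟩ hp
    simp only [Finset.HasAntidiagonal.mem_antidiagonal] at hp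
    rcases Nat.eq_zero_or_pos p1 with rfl | hp1
    · have h2 : p2 = m := by omega
      rw [h2, ih (fun k hk => hf k (Finset.mem_insert_of_mem hk)) m hm hmn, mul_zero]
    · rw [hf a (Finset.mem_insert_self a S) p1 hp1 (by omega), zero_mul]

lemma coeff_Gd_zero (d : ℕ) : PowerSeries.coeff (R := ℤ) 0 (Gd d) = 1 := by
  rw [Gd, PowerSeries.coeff_zero_eq_constantCoeff, map_mul, map_pow, map_prod]
  have h1 : constantCoeff (R := ℤ) (geomSeries 2) = 1 := by
    simp [geomSeries, ← PowerSeries.coeff_zero_eq_constantCoeff]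
  have h2 : ∀ k ∈ Finset.Icc 3 (d - 1),
      constantCoeff (R := ℤ) (geomSeries (2 * (k - 1)) ^ 3) = 1 := by
    intro k hk
    have : constantCoeff (R := ℤ) (geomSeries (2 * (k - 1))) = 1 := by
      simp [geomSeries, ← PowerSeries.coeff_zero_eq_constantCoeff]
    rw [map_pow, this, one_pow]
  rw [h1, Finset.prod_congr rfl h2, Finset.prod_const_one]
  norm_num

lemma coeff_P_low (d : ℕ) :
    ∀ m : ℕ, m ≤ 2 → PowerSeries.coeff (R := ℤ) m
      (∏ k ∈ Finset.Icc 3 (d - 1), geomSeries (2 * (k - 1)) ^ 3)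
      = if m = 0 then 1 else 0 := by
  intro m hm
  rcases Nat.eq_zero_or_pos m with rfl | hpos
  · simp only [if_pos rfl]
    rw [PowerSeries.coeff_zero_eq_constantCoeff, map_prod]
    apply Finset.prod_eq_one
    intro k hk
    have h : constantCoeff (R := ℤ) (geomSeries (2 * (k - 1))) = 1 := by
      simp [geomSeries, ← PowerSeries.coeff_zero_eq_constantCoeff]
    rw [map_pow, h, one_pow]
  · rw [if_neg hpos.ne']
    refine coeff_prod_low_zero _ _ 2 ?_ m hpos hm
    intro k hk m' hm' hm'2
    rw [Finset.mem_Icc] at hk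
    rw [coeff_geom_cube (2 * (k - 1)) m' (by omega)]
    have h1 : m' ≠ 0 := hm'.ne'
    have h2 : m' ≠ 2 * (k - 1) := by omega
    simp [h1, h2]

lemma coeff_Gd_two (d : ℕ) : PowerSeries.coeff (R := ℤ) 2 (Gd d) = 2 := by
  rw [Gd, PowerSeries.coeff_mul]
  have hcong : ∀ p ∈ Finset.HasAntidiagonal.antidiagonal 2,
      PowerSeries.coeff (R := ℤ) p.1 (geomSeries 2 ^ 2)
          * PowerSeries.coeff (R := ℤ) p.2 (∏ k ∈ Finset.Icc 3 (d - 1), geomSeries (2 * (k - 1)) ^ 3)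
        = ((if p.1 = 0 then (1:ℤ) else 0) + (if p.1 = 2 then 2 else 0))
          * ((if p.2 = 0 then (1:ℤ) else 0) + (if p.2 = 37 then 0 else 0)) := by
    intro p hp
    simp only [Finset.HasAntidiagonal.mem_antidiagonal] at hp
    rw [coeff_geom_sq 2 p.1 (by omega), coeff_P_low d p.2 (by omega)]
    split_ifs <;> ring
  rw [Finset.sum_congr rfl hcong]
  simp only [add_mul, mul_add, Finset.sum_add_distrib, sum_ind]
  norm_num

lemma prodA (e : ℕ) :
    ∏ k ∈ Finset.Icc 3 (e + 4), geomSeries (2 * (k - 1)) ^ 3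
      = ∏ k ∈ Finset.Icc 1 (e + 2), geomSeries (2 * k + 2) ^ 3 := by
  induction e with
  | zero =>
    rw [show Finset.Icc 3 (0 + 4) = {3, 4} from by decide,
        show Finset.Icc 1 (0 + 2) = {1, 2} from by decide,
        Finset.prod_insert (by decide), Finset.prod_insert (by decide),
        Finset.prod_singleton, Finset.prod_singleton]
  | succ n ih =>
    rw [show (n + 1 + 4 : ℕ) = (n + 4) + 1 from by omega,
        Finset.prod_Icc_succ_top (show 3 ≤ (n + 4) + 1 by omega), ih,
        show (n + 1 + 2 : ℕ) = (n + 2) + 1 from by omega,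
        Finset.prod_Icc_succ_top (show 1 ≤ (n + 2) + 1 by omega),
        show 2 * (n + 4 + 1 - 1) = 2 * (n + 2 + 1) + 2 from by omega]

lemma prodB (e : ℕ) :
    ∏ k ∈ Finset.Icc 1 (e + 5), geomSeries (2 * k + 2) ^ 3
      = (∏ k ∈ Finset.Icc 1 (e + 2), geomSeries (2 * k + 2) ^ 3)
          * geomSeries (2 * (e + 3) + 2) ^ 3 * geomSeries (2 * (e + 4) + 2) ^ 3
          * geomSeries (2 * (e + 5) + 2) ^ 3 := by
  rw [show (e + 5 : ℕ) = (e + 4) + 1 from rfl,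
      Finset.prod_Icc_succ_top (show 1 ≤ (e + 4) + 1 by omega),
      Finset.prod_Icc_succ_top (show 1 ≤ (e + 3) + 1 by omega),
      Finset.prod_Icc_succ_top (show 1 ≤ (e + 2) + 1 by omega)]

lemma Rd_factor (e : ℕ) :
    Rd (e + 5) = Gd (e + 5)
      * (geomSeries (2 * e + 8) ^ 3 * geomSeries (2 * e + 10) ^ 3
          * geomSeries (2 * e + 12) ^ 3) := by
  rw [Rd, Gd, prodB e, show (e + 5 - 1 : ℕ) = e + 4 from rfl, prodA e,
      show 2 * (e + 3) + 2 = 2 * e + 8 from by ring,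
      show 2 * (e + 4) + 2 = 2 * e + 10 from by ring,
      show 2 * (e + 5) + 2 = 2 * e + 12 from by ring]
  ring

theorem stmt16 (d : ℕ) (hd : 5 ≤ d) :
    (∀ i : ℕ, i ≤ d - 2 →
      PowerSeries.coeff (R := ℤ) (2 * i) (Gd d) = PowerSeries.coeff (R := ℤ) (2 * i) (Rd d)) ∧
    PowerSeries.coeff (R := ℤ) (2 * (d - 1)) (Gd d) = PowerSeries.coeff (R := ℤ) (2 * (d - 1)) (Rd d) - 3 ∧
    PowerSeries.coeff (R := ℤ) (2 * d) (Gd d) = PowerSeries.coeff (R := ℤ) (2 * d) (Rd d) - 9 := by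
  obtain ⟨e, rfl⟩ : ∃ e, d = e + 5 := ⟨d - 5, by omega⟩
  have key : ∀ n : ℕ, n ≤ 2 * e + 10 →
      PowerSeries.coeff (R := ℤ) n (Rd (e + 5))
        = PowerSeries.coeff (R := ℤ) n (Gd (e + 5))
          + (if 2 * e + 8 ≤ n then PowerSeries.coeff (R := ℤ) (n - (2 * e + 8)) (Gd (e + 5)) * 3 else 0)
          + (if 2 * e + 10 ≤ n then
              PowerSeries.coeff (R := ℤ) (n - (2 * e + 10)) (Gd (e + 5)) * 3 else 0) := by
    intro n hn
    rw [Rd_factor e, PowerSeries.coeff_mul]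
    have hcong : ∀ p ∈ Finset.HasAntidiagonal.antidiagonal n,
        PowerSeries.coeff (R := ℤ) p.1 (Gd (e + 5))
            * PowerSeries.coeff (R := ℤ) p.2 (geomSeries (2 * e + 8) ^ 3
                * geomSeries (2 * e + 10) ^ 3 * geomSeries (2 * e + 12) ^ 3)
          = PowerSeries.coeff (R := ℤ) p.1 (Gd (e + 5)) * (if p.2 = 0 then 1 else 0)
            + PowerSeries.coeff (R := ℤ) p.1 (Gd (e + 5)) * (if p.2 = 2 * e + 8 then 3 else 0)
            + PowerSeries.coeff (R := ℤ) p.1 (Gd (e + 5)) * (if p.2 = 2 * e + 10 then 3 else 0) := by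
      intro p hp
      simp only [Finset.HasAntidiagonal.mem_antidiagonal] at hp
      rw [coeff_E (2 * e + 8) (2 * e + 10) (2 * e + 12) p.2 (by omega) (by omega) (by omega)
        (by omega) (by omega)]
      ring
    rw [Finset.sum_congr rfl hcong, Finset.sum_add_distrib, Finset.sum_add_distrib,
        sum_snd_ind n 0 (fun j => PowerSeries.coeff (R := ℤ) j (Gd (e + 5))) 1,
        sum_snd_ind n (2 * e + 8) (fun j => PowerSeries.coeff (R := ℤ) j (Gd (e + 5))) 3,
        sum_snd_ind n (2 * e + 10) (fun j => PowerSeries.coeff (R := ℤ) j (Gd (e + 5))) 3,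
        if_pos (Nat.zero_le n)]
    simp
  refine ⟨?_, ?_, ?_⟩
  · intro i hi
    have hi' : 2 * i ≤ 2 * e + 6 := by omega
    rw [key (2 * i) (by omega)]
    rw [if_neg (by omega), if_neg (by omega)]
    ring
  · have h1 : 2 * (e + 5 - 1) = 2 * e + 8 := by omega
    rw [h1, key (2 * e + 8) (by omega), if_pos (by omega), if_neg (by omega)]
    rw [show (2 * e + 8) - (2 * e + 8) = 0 from by omega, coeff_Gd_zero]
    ring
  · have h1 : 2 * (e + 5) = 2 * e + 10 := by omega
    rw [h1, key (2 * e + 10) (by omega), if_pos (by omega), if_pos (by omega)]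
    rw [show (2 * e + 10) - (2 * e + 8) = 2 from by omega,
        show (2 * e + 10) - (2 * e + 10) = 0 from by omega, coeff_Gd_zero, coeff_Gd_two]
    ring
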